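/- Let k be an algebraically closed field of characteristic p and q = p^e for some e ≥ 1. Then for every g ∈ GL_r(k⟦z⟧) there exists x ∈ GL_r(k⟦z⟧) with g = x⁻¹·σ(x); that is, every element of GL_r(k⟦z⟧) is σ-conjugate to the identity. -/

import Mathlib

noncomputable section

open scoped Classical

set_option linter.unusedSectionVars false

namespace HVpaper

open Polynomial Matrix

section Poly

set_option linter.unusedSectionVars false

variable {k : Type*} [Field k] [IsAlgClosed k] {q : ℕ}

/-- Auxiliary polynomials used in the cyclic-vector argument. -/
private def langPoly (q : ℕ) (a : ℕ → k) (δ : k) : ℕ → k[X]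
  | 0 => C (a 0) * X ^ q - C δ
  | n+1 => (langPoly q a δ n) ^ q + C (a (n+1)) * X ^ q

private lemma langPoly_derivative (hqk : (q : k) = 0) (a : ℕ → k) (δ : k) :
    ∀ n, derivative (langPoly q a δ n) = 0 := by
  intro n
  induction n with
  | zero => simp [langPoly, derivative_X_pow, hqk]
  | succ n ih => simp [langPoly, derivative_pow, hqk, ih]

private lemma langPoly_eval_step (a : ℕ → k) (δ : k) (t : k) (n : ℕ) :
    (langPoly q a δ (n+1)).eval t = ((langPoly q a δ n).eval t) ^ q + a (n+1) * t ^ q := by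
  simp [langPoly]

private lemma langPoly_eval_zero_root (hq0 : q ≠ 0) (a : ℕ → k) :
    ∀ n, (langPoly q a (0 : k) n).eval 0 = 0 := by
  intro n
  induction n with
  | zero => simp [langPoly, zero_pow hq0]
  | succ n ih => simp [langPoly, ih, zero_pow hq0]

private lemma langPoly_natDegree (hq2 : 2 ≤ q) (a : ℕ → k) (δ : k) (ha0 : a 0 ≠ 0) :
    ∀ n, (langPoly q a δ n).natDegree = q ^ (n + 1) := by
  intro n
  induction n with
  | zero =>
      have h1 : (C (a 0) * X ^ q : k[X]).natDegree = q := by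
        simp [natDegree_C_mul_X_pow q (a 0) ha0]
      have h2 : (C δ : k[X]).natDegree < (C (a 0) * X ^ q : k[X]).natDegree := by
        rw [h1, natDegree_C]; omega
      rw [langPoly, pow_one, natDegree_sub_eq_left_of_natDegree_lt h2, h1]
  | succ n ih =>
      have hpow : ((langPoly q a δ n) ^ q).natDegree = q ^ (n + 2) := by
        rw [natDegree_pow, ih]; ring
      have h2 : (C (a (n+1)) * X ^ q : k[X]).natDegree < ((langPoly q a δ n) ^ q).natDegree := by
        rw [hpow]
        refine lt_of_le_of_lt (natDegree_C_mul_X_pow_le _ _) ?_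
        have : q < q ^ (n + 2) := by
          calc q = q ^ 1 := (pow_one q).symm
            _ < q ^ (n + 2) := Nat.pow_lt_pow_right (by omega) (by omega)
        exact this
      rw [langPoly, natDegree_add_eq_left_of_natDegree_lt h2, hpow]


private lemma langPoly_exists_fixed (hqk : (q : k) = 0) (a : ℕ → k) (δ : k) (n : ℕ) :
    ∃ t : k, (langPoly q a δ n).eval t = t := by
  set Q : k[X] := langPoly q a δ n - X with hQ
  have hder : derivative Q = -1 := by
    rw [hQ, derivative_sub, langPoly_derivative hqk, derivative_X]; ring
  have hdeg : Q.degree ≠ 0 := by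
    intro h
    have hC := Polynomial.eq_C_of_degree_le_zero (le_of_eq h)
    rw [hC, derivative_C] at hder
    exact one_ne_zero (neg_eq_zero.mp hder.symm)
  obtain ⟨t, ht⟩ := IsAlgClosed.exists_root Q hdeg
  refine ⟨t, ?_⟩
  have : (langPoly q a δ n).eval t - t = 0 := by
    have := ht
    simpa [hQ, Polynomial.IsRoot, eval_sub] using this
  exact sub_eq_zero.mp this

private lemma langPoly_exists_fixed_ne_zero (hq2 : 2 ≤ q) (hqk : (q : k) = 0)
    (a : ℕ → k) (ha0 : a 0 ≠ 0) (n : ℕ) :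
    ∃ t : k, t ≠ 0 ∧ (langPoly q a (0 : k) n).eval t = t := by
  set P : k[X] := langPoly q a (0 : k) n with hP
  set Q : k[X] := P - X with hQ
  have h2 : 2 ≤ q ^ (n + 1) := le_trans hq2 (Nat.le_self_pow (by omega) q)
  have hPdeg : P.natDegree = q ^ (n + 1) := langPoly_natDegree hq2 a 0 ha0 n
  have hdegX : (X : k[X]).natDegree < P.natDegree := by
    rw [natDegree_X, hPdeg]; omega
  have hQdeg : Q.natDegree = q ^ (n + 1) := by
    rw [hQ, natDegree_sub_eq_left_of_natDegree_lt hdegX, hPdeg]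
  have hQne : Q ≠ 0 := by
    intro h; rw [h, natDegree_zero] at hQdeg; omega
  have hder : derivative Q = -1 := by
    rw [hQ, derivative_sub, langPoly_derivative hqk, derivative_X]; ring
  have hsep : Q.Separable := by
    rw [Polynomial.separable_def, hder]
    exact ⟨0, -1, by ring⟩
  have hsq : Squarefree Q := hsep.squarefree
  have hX : (X : k[X]) ∣ Q := by
    rw [X_dvd_iff, coeff_zero_eq_eval_zero]
    simp [hQ, hP, langPoly_eval_zero_root (by omega : q ≠ 0) a n]
  obtain ⟨R, hR⟩ := hX
  have hRne : R ≠ 0 := by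
    intro h; exact hQne (by rw [hR, h, mul_zero])
  have hRdeg : 1 ≤ R.natDegree := by
    have hm := natDegree_mul (Polynomial.X_ne_zero (R := k)) hRne
    rw [← hR, hQdeg, natDegree_X] at hm
    omega
  have hRdeg' : R.degree ≠ 0 := by
    intro h
    have : R.natDegree = 0 := Polynomial.natDegree_eq_zero_iff_degree_le_zero.mpr (le_of_eq h)
    omega
  obtain ⟨s, hs⟩ := IsAlgClosed.exists_root R hRdeg'
  have hsroot : R.eval s = 0 := hs
  refine ⟨s, ?_, ?_⟩
  · intro h
    subst h
    have hXR : (X : k[X]) ∣ R := by rw [X_dvd_iff, coeff_zero_eq_eval_zero]; exact hsroot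
    obtain ⟨R', hR'⟩ := hXR
    have : IsUnit (X : k[X]) := hsq X ⟨R', by rw [hR, hR']; ring⟩
    exact Polynomial.not_isUnit_X this
  · have hQs : Q.eval s = 0 := by rw [hR, eval_mul, hsroot, mul_zero]
    have : P.eval s - s = 0 := by simpa [hQ, eval_sub] using hQs
    exact sub_eq_zero.mp this

end Poly


section Semilinear

variable {k : Type*} [Field k] [IsAlgClosed k] {q : ℕ}
variable {V : Type*} [AddCommGroup V] [Module k V]

private lemma exists_pow_root (hq0 : q ≠ 0) (a : k) : ∃ b : k, b ^ q = a := by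
  obtain ⟨b, hb⟩ := IsAlgClosed.exists_pow_nat_eq a (Nat.pos_of_ne_zero hq0)
  exact ⟨b, hb⟩

/-- If a combination with nonzero top coefficient vanishes, the top vector is a combination
of the earlier ones. -/
private lemma rel_of_sum_eq_zero (s : ℕ → V) (c : ℕ → k) (n : ℕ)
    (h : ∑ i ∈ Finset.range (n + 1), c i • s i = 0) (hcn : c n ≠ 0) :
    s n = ∑ i ∈ Finset.range n, (-(c i / c n)) • s i := by
  rw [Finset.sum_range_succ] at h
  have h1 : c n • s n = ∑ i ∈ Finset.range n, (-(c i)) • s i := by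
    have := eq_neg_of_add_eq_zero_right h
    rw [this, ← Finset.sum_neg_distrib]
    exact Finset.sum_congr rfl fun i _ => (neg_smul _ _).symm
  have h2 : s n = (c n)⁻¹ • (c n • s n) := by
    rw [smul_smul, inv_mul_cancel₀ hcn, one_smul]
  rw [h2, h1, Finset.smul_sum]
  refine Finset.sum_congr rfl fun i _ => ?_
  rw [smul_smul]
  congr 1
  field_simp

private lemma psi_zero (hq0 : q ≠ 0) (ψ : V → V)
    (hsmul : ∀ (c : k) (x : V), ψ (c • x) = c ^ q • ψ x) : ψ 0 = 0 := by
  have := hsmul 0 0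
  rwa [zero_smul, zero_pow hq0, zero_smul] at this

/-- The core telescoping computation of the cyclic-vector argument. -/
private lemma lang_core (ψ : V → V)
    (hadd : ∀ x y, ψ (x + y) = ψ x + ψ y)
    (hsmul : ∀ (c : k) (x : V), ψ (c • x) = c ^ q • ψ x)
    (u : V) (m : ℕ) (hm : 1 ≤ m) (a : ℕ → k)
    (hrel : ψ^[m] u = ∑ i ∈ Finset.range m, a i • ψ^[i] u)
    (δ : k) (t : k) (hroot : (langPoly q a δ (m - 1)).eval t = t) :
    ψ (∑ i ∈ Finset.range m, ((langPoly q a δ i).eval t) • ψ^[i] u)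
      - ∑ i ∈ Finset.range m, ((langPoly q a δ i).eval t) • ψ^[i] u = δ • u := by
  obtain ⟨n, rfl⟩ : ∃ n, m = n + 1 := ⟨m - 1, by omega⟩
  set c : ℕ → k := fun i => (langPoly q a δ i).eval t with hc
  set s : ℕ → V := fun i => ψ^[i] u with hs
  have hs0 : s 0 = u := rfl
  have hssucc : ∀ i, s (i + 1) = ψ (s i) := fun i => Function.iterate_succ_apply' ψ i u
  have hcn : c n = t := by simpa using hroot
  have key1 : ∀ i, c (i + 1) = c i ^ q + a (i + 1) * t ^ q := fun i => langPoly_eval_step a δ t i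
  have key0 : c 0 = a 0 * t ^ q - δ := by simp [hc, langPoly]
  set Ψ : V →+ V := AddMonoidHom.mk' ψ hadd with hΨ
  have hψ_sum : ψ (∑ i ∈ Finset.range (n + 1), c i • s i)
      = ∑ i ∈ Finset.range (n + 1), (c i ^ q) • s (i + 1) := by
    rw [show ψ = ⇑Ψ from rfl, map_sum]
    refine Finset.sum_congr rfl fun i _ => ?_
    rw [show Ψ (c i • s i) = ψ (c i • s i) from rfl, hsmul, hssucc]
  have hsm : s (n + 1) = ∑ i ∈ Finset.range (n + 1), a i • s i := hrel
  have hlast : c n ^ q • s (n + 1)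
      = ∑ i ∈ Finset.range n, (t ^ q * a (i + 1)) • s (i + 1) + (t ^ q * a 0) • s 0 := by
    rw [hcn, hsm, Finset.smul_sum]
    simp_rw [smul_smul]
    exact Finset.sum_range_succ' (fun i => (t ^ q * a i) • s i) n
  rw [hψ_sum, sub_eq_iff_eq_add]
  calc ∑ i ∈ Finset.range (n + 1), (c i ^ q) • s (i + 1)
      = (∑ i ∈ Finset.range n, (c i ^ q) • s (i + 1)
          + ∑ i ∈ Finset.range n, (t ^ q * a (i + 1)) • s (i + 1)) + (t ^ q * a 0) • s 0 := by
        rw [Finset.sum_range_succ, hlast]; abel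
    _ = ∑ i ∈ Finset.range n, (c i ^ q + t ^ q * a (i + 1)) • s (i + 1)
          + (t ^ q * a 0) • s 0 := by
        rw [← Finset.sum_add_distrib]
        simp_rw [← add_smul]
    _ = ∑ i ∈ Finset.range n, c (i + 1) • s (i + 1) + (δ + c 0) • s 0 := by
        congr 1
        · refine Finset.sum_congr rfl fun i _ => ?_
          rw [key1]; ring_nf
        · congr 1
          rw [key0]; ring
    _ = δ • u + ∑ i ∈ Finset.range (n + 1), c i • s i := by
        rw [Finset.sum_range_succ' (fun i => c i • s i) n, add_smul, hs0]; abel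

end Semilinear


section Semilinear2

variable {k : Type*} [Field k] [IsAlgClosed k] {q : ℕ}
variable {V : Type*} [AddCommGroup V] [Module k V] [FiniteDimensional k V]

/-- The "linear dependence" relation for the iterates of `ψ` on `u`. -/
private def Rel (ψ : V → V) (u : V) (m : ℕ) : Prop :=
  ∃ a : ℕ → k, ψ^[m] u = ∑ i ∈ Finset.range m, a i • ψ^[i] u

private lemma exists_rel (ψ : V → V) (u : V) : ∃ m, Rel (k := k) ψ u m := by
  set d := Module.finrank k V with hd
  set s : ℕ → V := fun i => ψ^[i] u with hs
  have hnli : ¬ LinearIndependent k (fun i : Fin (d + 1) => s i) := by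
    intro h
    have := h.fintype_card_le_finrank
    rw [Fintype.card_fin] at this
    omega
  obtain ⟨g, hg0, i0, hi0⟩ := Fintype.not_linearIndependent_iff.mp hnli
  set T : Finset (Fin (d + 1)) := Finset.univ.filter (fun i => g i ≠ 0) with hT
  have hTne : T.Nonempty := ⟨i0, by simp [hT, hi0]⟩
  set M : Fin (d + 1) := T.max' hTne with hM
  have hgM : g M ≠ 0 := by
    have := T.max'_mem hTne
    simpa [hT] using this
  set G : ℕ → k := fun i => if h : i < d + 1 then g ⟨i, h⟩ else 0 with hG
  have hGzero : ∀ i, (M : ℕ) < i → G i = 0 := by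
    intro i hi
    by_cases h : i < d + 1
    · have : g ⟨i, h⟩ = 0 := by
        by_contra hne
        have hmem : (⟨i, h⟩ : Fin (d + 1)) ∈ T := by simp [hT, hne]
        have := T.le_max' _ hmem
        have : (⟨i, h⟩ : Fin (d + 1)) ≤ M := this
        simp only [Fin.le_def, Fin.val_mk] at this
        omega
      simp [hG, h, this]
    · simp [hG, h]; intro h'; omega
  have hsum : ∑ i ∈ Finset.range (d + 1), G i • s i = 0 := by
    rw [← Fin.sum_univ_eq_sum_range (fun i => G i • s i) (d + 1)]
    rw [← hg0]
    refine Finset.sum_congr rfl fun i _ => ?_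
    congr 1
    simp [hG, i.isLt]; intro h; exact absurd i.isLt (by omega)
  have hsum2 : ∑ i ∈ Finset.range ((M : ℕ) + 1), G i • s i = 0 := by
    rw [← hsum]
    refine Finset.sum_subset ?_ ?_
    · intro x hx
      rw [Finset.mem_range] at hx ⊢
      have := M.isLt
      omega
    · intro x _ hx
      rw [Finset.mem_range] at hx
      rw [hGzero x (by omega), zero_smul]
  have hGM : G (M : ℕ) = g M := by simp [hG, M.isLt, Fin.eta]; intro h; exact absurd M.isLt (by omega)
  refine ⟨(M : ℕ), fun i => -(G i / G (M : ℕ)), ?_⟩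
  exact rel_of_sum_eq_zero s G (M : ℕ) hsum2 (by rw [hGM]; exact hgM)

private lemma rel_a0_ne_zero (hq0 : q ≠ 0) (ψ : V → V)
    (hadd : ∀ x y, ψ (x + y) = ψ x + ψ y)
    (hsmul : ∀ (c : k) (x : V), ψ (c • x) = c ^ q • ψ x)
    (hinj : Function.Injective ψ) (u : V) (hu : u ≠ 0)
    (m : ℕ) (hm : 1 ≤ m) (a : ℕ → k)
    (hrel : ψ^[m] u = ∑ i ∈ Finset.range m, a i • ψ^[i] u)
    (hmin : ∀ j, j < m → ¬ Rel (k := k) ψ u j) :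
    a 0 ≠ 0 := by
  intro ha0
  obtain ⟨n, rfl⟩ : ∃ n, m = n + 1 := ⟨m - 1, by omega⟩
  set s : ℕ → V := fun i => ψ^[i] u with hs
  have hssucc : ∀ i, s (i + 1) = ψ (s i) := fun i => Function.iterate_succ_apply' ψ i u
  set Ψ : V →+ V := AddMonoidHom.mk' ψ hadd with hΨ
  choose b hb using fun i => exists_pow_root (k := k) hq0 (a (i + 1))
  have hright : ∑ i ∈ Finset.range (n + 1), a i • s i
      = ψ (∑ i ∈ Finset.range n, b i • s i) := by
    rw [Finset.sum_range_succ' (fun i => a i • s i) n, ha0, zero_smul, add_zero]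
    rw [show ψ = ⇑Ψ from rfl, map_sum]
    refine Finset.sum_congr rfl fun i _ => ?_
    rw [show Ψ (b i • s i) = ψ (b i • s i) from rfl, hsmul, hb, hssucc]
  have hleft : ψ^[n + 1] u = ψ (s n) := hssucc n
  have : s n = ∑ i ∈ Finset.range n, b i • s i :=
    hinj (by rw [← hleft, hrel, hright])
  exact hmin n (by omega) ⟨fun i => b i, this⟩

/-- Surjectivity of `ψ - id` for a `q`-semilinear map `ψ`. -/
private lemma semilinear_sub_one_surjective (hq2 : 2 ≤ q) (hqk : (q : k) = 0)
    (ψ : V → V)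
    (hadd : ∀ x y, ψ (x + y) = ψ x + ψ y)
    (hsmul : ∀ (c : k) (x : V), ψ (c • x) = c ^ q • ψ x)
    (w : V) : ∃ v, ψ v - v = w := by
  by_cases hw : w = 0
  · exact ⟨0, by rw [psi_zero (by omega) ψ hsmul, hw, sub_zero]⟩
  have hex := exists_rel (k := k) ψ w
  set m := Nat.find hex with hm
  obtain ⟨a, hrel⟩ : Rel (k := k) ψ w m := Nat.find_spec hex
  have hm1 : 1 ≤ m := by
    rcases Nat.eq_zero_or_pos m with h | h
    · exfalso
      rw [h] at hrel
      simp at hrel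
      exact hw hrel
    · exact h
  obtain ⟨t, ht⟩ := langPoly_exists_fixed hqk a 1 (m - 1)
  refine ⟨∑ i ∈ Finset.range m, ((langPoly q a (1 : k) i).eval t) • ψ^[i] w, ?_⟩
  have := lang_core ψ hadd hsmul w m hm1 a hrel 1 t ht
  rwa [one_smul] at this

/-- A nonzero injective `q`-semilinear map has a nonzero fixed vector. -/
private lemma semilinear_exists_fixed_ne_zero (hq2 : 2 ≤ q) (hqk : (q : k) = 0)
    (ψ : V → V)
    (hadd : ∀ x y, ψ (x + y) = ψ x + ψ y)
    (hsmul : ∀ (c : k) (x : V), ψ (c • x) = c ^ q • ψ x)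
    (hinj : Function.Injective ψ) (u : V) (hu : u ≠ 0) :
    ∃ v : V, v ≠ 0 ∧ ψ v = v := by
  have hex := exists_rel (k := k) ψ u
  set m := Nat.find hex with hm
  obtain ⟨a, hrel⟩ : Rel (k := k) ψ u m := Nat.find_spec hex
  have hmin : ∀ j, j < m → ¬ Rel (k := k) ψ u j := fun j hj => Nat.find_min hex hj
  have hm1 : 1 ≤ m := by
    rcases Nat.eq_zero_or_pos m with h | h
    · exfalso
      rw [h] at hrel
      simp at hrel
      exact hu hrel
    · exact h
  have ha0 : a 0 ≠ 0 := rel_a0_ne_zero (by omega) ψ hadd hsmul hinj u hu m hm1 a hrel hmin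
  obtain ⟨t, ht0, ht⟩ := langPoly_exists_fixed_ne_zero hq2 hqk a ha0 (m - 1)
  set c : ℕ → k := fun i => (langPoly q a (0 : k) i).eval t with hc
  set s : ℕ → V := fun i => ψ^[i] u with hs
  set v : V := ∑ i ∈ Finset.range m, c i • s i with hv
  have hcore := lang_core ψ hadd hsmul u m hm1 a hrel 0 t ht
  rw [zero_smul, sub_eq_zero] at hcore
  refine ⟨v, ?_, hcore⟩
  intro hv0
  obtain ⟨n, hn⟩ : ∃ n, m = n + 1 := ⟨m - 1, by omega⟩
  have hcn : c n ≠ 0 := by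
    have : c n = t := by
      rw [hc]
      have : m - 1 = n := by omega
      rw [← this]
      simpa using ht
    rw [this]; exact ht0
  have := rel_of_sum_eq_zero s c n (by rw [← hn]; exact hv0) hcn
  exact hmin n (by omega) ⟨fun i => -(c i / c n), this⟩

end Semilinear2


section Span

variable {k : Type*} [Field k] [IsAlgClosed k] {q : ℕ}
variable {V : Type*} [AddCommGroup V] [Module k V] [FiniteDimensional k V]

/-- Lang's theorem, abstract form: the fixed vectors of an injective `q`-semilinear map span. -/
private lemma fixed_span_top (hq2 : 2 ≤ q) (hqk : (q : k) = 0)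
    (ψ : V → V)
    (hadd : ∀ x y, ψ (x + y) = ψ x + ψ y)
    (hsmul : ∀ (c : k) (x : V), ψ (c • x) = c ^ q • ψ x)
    (hinj : Function.Injective ψ) :
    Submodule.span k {v : V | ψ v = v} = ⊤ := by
  have hq0 : q ≠ 0 := by omega
  by_contra hW
  set W : Submodule k V := Submodule.span k {v : V | ψ v = v} with hWdef
  have hfix_mem : ∀ v : V, ψ v = v → v ∈ W := fun v hv => Submodule.subset_span hv
  have hsub : ∀ x y : V, ψ x - ψ y = ψ (x - y) := by
    intro x y
    have := hadd y (x - y)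
    rw [add_sub_cancel] at this
    rw [this]; abel
  have hWstable : ∀ w ∈ W, ψ w ∈ W := by
    intro w hw
    refine Submodule.span_induction ?_ ?_ ?_ ?_ hw
    · intro x hx
      rw [hx]
      exact Submodule.subset_span hx
    · rw [psi_zero hq0 ψ hsmul]; exact W.zero_mem
    · intro x y _ _ hx hy
      rw [hadd]; exact W.add_mem hx hy
    · intro c x _ hx
      rw [hsmul]; exact W.smul_mem _ hx
  have hWpre : ∀ v : V, ψ v ∈ W → v ∈ W := by
    intro v hv
    rw [hWdef, Submodule.mem_span_set'] at hv
    obtain ⟨N, f, gg, hfg⟩ := hv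
    choose b hb using fun i => exists_pow_root (k := k) hq0 (f i)
    have hψ : ψ (∑ i, b i • (gg i : V)) = ψ v := by
      set Ψ : V →+ V := AddMonoidHom.mk' ψ hadd with hΨ
      rw [show ψ (∑ i, b i • (gg i : V)) = Ψ (∑ i, b i • (gg i : V)) from rfl, map_sum]
      rw [← hfg]
      refine Finset.sum_congr rfl fun i _ => ?_
      rw [show Ψ (b i • (gg i : V)) = ψ (b i • (gg i : V)) from rfl, hsmul, hb]
      congr 1
      exact (gg i).2
    have hveq : v = ∑ i, b i • (gg i : V) := (hinj hψ).symm
    rw [hveq]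
    exact Submodule.sum_mem _ fun i _ => W.smul_mem _ (Submodule.subset_span (gg i).2)
  -- the induced map on the quotient
  have hlt : W < ⊤ := lt_top_iff_ne_top.mpr hW
  haveI : Nontrivial (V ⧸ W) := Submodule.Quotient.nontrivial_iff.mpr hW
  set ψb : V ⧸ W → V ⧸ W := fun x => Submodule.Quotient.mk (ψ (Quotient.out x)) with hψb
  have hkey : ∀ v : V, ψb (Submodule.Quotient.mk v) = Submodule.Quotient.mk (ψ v) := by
    intro v
    have h1 : Submodule.Quotient.mk (Quotient.out (Submodule.Quotient.mk v : V ⧸ W))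
        = (Submodule.Quotient.mk v : V ⧸ W) := Quotient.out_eq _
    rw [Submodule.Quotient.eq] at h1
    rw [hψb]
    rw [Submodule.Quotient.eq, hsub]
    exact hWstable _ h1
  have hmk : ∀ x : V ⧸ W, ∃ v : V, Submodule.Quotient.mk v = x :=
    fun x => Submodule.Quotient.mk_surjective W x
  have hbadd : ∀ x y : V ⧸ W, ψb (x + y) = ψb x + ψb y := by
    intro x y
    obtain ⟨v, rfl⟩ := hmk x
    obtain ⟨w, rfl⟩ := hmk y
    rw [← Submodule.Quotient.mk_add, hkey, hkey, hkey, hadd, Submodule.Quotient.mk_add]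
  have hbsmul : ∀ (c : k) (x : V ⧸ W), ψb (c • x) = c ^ q • ψb x := by
    intro c x
    obtain ⟨v, rfl⟩ := hmk x
    rw [← Submodule.Quotient.mk_smul, hkey, hkey, hsmul, Submodule.Quotient.mk_smul]
  have hbinj : Function.Injective ψb := by
    intro x y hxy
    obtain ⟨v, rfl⟩ := hmk x
    obtain ⟨w, rfl⟩ := hmk y
    rw [hkey, hkey, Submodule.Quotient.eq, hsub] at hxy
    rw [Submodule.Quotient.eq]
    exact hWpre _ hxy
  obtain ⟨u0, hu0⟩ := exists_ne (0 : V ⧸ W)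
  obtain ⟨vb, hvb0, hvbfix⟩ :=
    semilinear_exists_fixed_ne_zero hq2 hqk ψb hbadd hbsmul hbinj u0 hu0
  obtain ⟨v, rfl⟩ := hmk vb
  rw [hkey, Submodule.Quotient.eq] at hvbfix
  -- solve the approximation on W
  set ψW : W → W := fun w => ⟨ψ (w : V), hWstable _ w.2⟩ with hψW
  have hWadd : ∀ x y : W, ψW (x + y) = ψW x + ψW y := by
    intro x y
    apply Subtype.ext
    exact hadd _ _
  have hWsmul : ∀ (c : k) (x : W), ψW (c • x) = c ^ q • ψW x := by
    intro c x
    apply Subtype.ext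
    exact hsmul _ _
  obtain ⟨uW, huW⟩ := semilinear_sub_one_surjective hq2 hqk ψW hWadd hWsmul
    ⟨-(ψ v - v), W.neg_mem hvbfix⟩
  have hfixed : ψ (v + (uW : V)) = v + (uW : V) := by
    have h1 : ψ (uW : V) - (uW : V) = -(ψ v - v) := congrArg Subtype.val huW
    have h2 : ψ (uW : V) = (uW : V) - (ψ v - v) := by rw [sub_eq_add_neg, ← h1]; abel
    rw [hadd, h2]
    abel
  have : v + (uW : V) ∈ W := hfix_mem _ hfixed
  have hvW : v ∈ W := by
    have := W.sub_mem this uW.2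
    simpa using this
  rw [show (Submodule.Quotient.mk v : V ⧸ W) = 0 from (Submodule.Quotient.mk_eq_zero W).mpr hvW]
    at hvb0
  exact hvb0 rfl

end Span


section MatrixLang

variable {k : Type*} [Field k] [IsAlgClosed k] {q : ℕ} {r : ℕ}

/-- Lang's theorem for `GL_r` over an algebraically closed field, first form. -/
private lemma matLang (hq2 : 2 ≤ q) (hqk : (q : k) = 0) (φ : k →+* k) (hφ : ∀ x, φ x = x ^ q)
    (A : Matrix (Fin r) (Fin r) k) (hA : IsUnit A) :
    ∃ X : Matrix (Fin r) (Fin r) k, IsUnit X ∧ X = A * X.map φ := by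
  have hdetA : IsUnit A.det := (Matrix.isUnit_iff_isUnit_det A).mp hA
  set ψ : (Fin r → k) → (Fin r → k) := fun v => A.mulVec (fun i => φ (v i)) with hψ
  have hadd : ∀ x y : Fin r → k, ψ (x + y) = ψ x + ψ y := by
    intro x y
    rw [hψ]
    have : (fun i => φ ((x + y) i)) = (fun i => φ (x i)) + fun i => φ (y i) := by
      funext i; simp [map_add]
    simp only [this, Matrix.mulVec_add]
  have hsmul : ∀ (c : k) (x : Fin r → k), ψ (c • x) = c ^ q • ψ x := by
    intro c x
    rw [hψ]
    have : (fun i => φ ((c • x) i)) = c ^ q • fun i => φ (x i) := by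
      funext i; simp [_root_.map_mul, hφ, mul_pow]
    simp only [this, Matrix.mulVec_smul]
  have hinj : Function.Injective ψ := by
    intro x y hxy
    simp only [hψ] at hxy
    have h2 : ∀ z : Fin r → k, A⁻¹.mulVec (A.mulVec z) = z := by
      intro z
      rw [Matrix.mulVec_mulVec, Matrix.nonsing_inv_mul A hdetA, Matrix.one_mulVec]
    have h3 : (fun i => φ (x i)) = fun i => φ (y i) := by
      rw [← h2 (fun i => φ (x i)), ← h2 (fun i => φ (y i)), hxy]
    funext i
    exact φ.injective (congrFun h3 i)
  have hspan := fixed_span_top hq2 hqk ψ hadd hsmul hinj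
  obtain ⟨bs, hsub, hspan2, hli⟩ := exists_linearIndependent k {v : Fin r → k | ψ v = v}
  rw [hspan] at hspan2
  have hli' : LinearIndependent k ((↑) : bs → (Fin r → k)) := hli
  haveI : Finite bs := by
    have := hli'.setFinite
    exact this
  haveI : Fintype bs := Set.Finite.fintype (hli'.setFinite)
  let b0 : Module.Basis bs k (Fin r → k) := Module.Basis.mk hli' (by rw [Subtype.range_coe, hspan2])
  let e : bs ≃ Fin r := b0.indexEquiv (Pi.basisFun k (Fin r))
  let b : Module.Basis (Fin r) k (Fin r → k) := b0.reindex e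
  have hbfix : ∀ j, ψ (b j) = b j := by
    intro j
    have : b j = ((e.symm j : bs) : Fin r → k) := by
      simp [b, Module.Basis.reindex_apply, b0, Module.Basis.mk_apply]
    rw [this]
    exact hsub (e.symm j).2
  set X : Matrix (Fin r) (Fin r) k := Matrix.of (fun i j => b j i) with hX
  have hXunit : IsUnit X := by
    have : X = (Pi.basisFun k (Fin r)).toMatrix ⇑b := by
      ext i j
      rw [Module.Basis.toMatrix_apply, Pi.basisFun_repr]
      rfl
    rw [this]
    have := Module.Basis.invertibleToMatrix (Pi.basisFun k (Fin r)) b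
    exact isUnit_of_invertible _
  refine ⟨X, hXunit, ?_⟩
  ext i j
  have hcol : (A * X.map φ) i j = ψ (b j) i := by
    simp only [hψ, Matrix.mulVec, dotProduct, Matrix.mul_apply, Matrix.map_apply]
    rfl
  rw [hcol, hbfix]
  rfl

/-- Lang's theorem for `GL_r`, in the form needed for the constant term. -/
private lemma matLang' (hq2 : 2 ≤ q) (hqk : (q : k) = 0) (φ : k →+* k) (hφ : ∀ x, φ x = x ^ q)
    (B : Matrix (Fin r) (Fin r) k) (hB : IsUnit B) :
    ∃ Y : Matrix (Fin r) (Fin r) k, IsUnit Y ∧ Y.map φ = Y * B := by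
  have hdetB : IsUnit B.det := (Matrix.isUnit_iff_isUnit_det B).mp hB
  have hBt : IsUnit Bᵀ := by
    rw [Matrix.isUnit_iff_isUnit_det, Matrix.det_transpose]; exact hdetB
  have hBtinv : IsUnit (Bᵀ)⁻¹ := (Matrix.isUnit_nonsing_inv_iff).mpr hBt
  obtain ⟨X, hXu, hXeq⟩ := matLang hq2 hqk φ hφ ((Bᵀ)⁻¹) hBtinv
  refine ⟨Xᵀ, ?_, ?_⟩
  · rw [Matrix.isUnit_iff_isUnit_det, Matrix.det_transpose]
    exact (Matrix.isUnit_iff_isUnit_det X).mp hXu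
  · have hdetBt : IsUnit (Bᵀ).det := (Matrix.isUnit_iff_isUnit_det Bᵀ).mp hBt
    have h1 : Bᵀ * X = X.map φ := by
      rw [hXeq, ← mul_assoc, Matrix.mul_nonsing_inv Bᵀ hdetBt, one_mul, ← hXeq]
    have h2 := congrArg Matrix.transpose h1
    rw [Matrix.transpose_mul] at h2
    rw [Matrix.transpose_transpose] at h2
    rw [Matrix.transpose_map]
    exact h2.symm

/-- Surjectivity of `X ↦ φ(X) - X·G₀`, the inductive step of the successive approximation. -/
private lemma matStep (hq2 : 2 ≤ q) (hqk : (q : k) = 0) (φ : k →+* k) (hφ : ∀ x, φ x = x ^ q)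
    (G0 : Matrix (Fin r) (Fin r) k) (hG0 : IsUnit G0) (S : Matrix (Fin r) (Fin r) k) :
    ∃ X : Matrix (Fin r) (Fin r) k, X.map φ = X * G0 + S := by
  have hdet : IsUnit G0.det := (Matrix.isUnit_iff_isUnit_det G0).mp hG0
  set ψ : Matrix (Fin r) (Fin r) k → Matrix (Fin r) (Fin r) k :=
    fun X => (X.map φ) * G0⁻¹ with hψ
  have hadd : ∀ x y, ψ (x + y) = ψ x + ψ y := by
    intro x y
    rw [hψ]
    have : (x + y).map φ = x.map φ + y.map φ := by
      ext i j; simp [Matrix.map_apply, map_add]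
    simp only [this, add_mul]
  have hsmul : ∀ (c : k) (x : Matrix (Fin r) (Fin r) k), ψ (c • x) = c ^ q • ψ x := by
    intro c x
    rw [hψ]
    have : (c • x).map φ = c ^ q • x.map φ := by
      ext i j; simp [Matrix.map_apply, _root_.map_mul, hφ, mul_pow]
    simp only [this, Matrix.smul_mul]
  obtain ⟨X, hXeq⟩ := semilinear_sub_one_surjective hq2 hqk ψ hadd hsmul (S * G0⁻¹)
  refine ⟨X, ?_⟩
  have h1 : X.map φ * G0⁻¹ = X + S * G0⁻¹ := by
    rw [← hXeq, hψ]; abel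
  have h2 := congrArg (· * G0) h1
  rw [mul_assoc, Matrix.nonsing_inv_mul G0 hdet, mul_one, add_mul, mul_assoc,
    Matrix.nonsing_inv_mul G0 hdet, mul_one] at h2
  exact h2

end MatrixLang


/-- Strong-recursion helper. -/
private def seqAux {M : Type*} (f : (n : ℕ) → ((i : ℕ) → i < n → M) → M) : ℕ → M
  | n => f n (fun i h => seqAux f i)
  termination_by n => n
  decreasing_by exact h

private lemma seqAux_eq {M : Type*} (f : (n : ℕ) → ((i : ℕ) → i < n → M) → M) (n : ℕ) :
    seqAux f n = f n (fun i _ => seqAux f i) := by rw [seqAux]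

/-- The map `σ` on `k⟦z⟧`:  it fixes `z` and raises each coefficient to the `q`-th power. -/
def psFrob {A : Type*} [CommRing A] (q : ℕ) (f : PowerSeries A) : PowerSeries A :=
  PowerSeries.mk fun n => (PowerSeries.coeff n f) ^ q

/-- The pro-algebraic version of **Lang's theorem** used in Remark 8.1 of the paper:  every
element of `GL_r(k⟦z⟧)` is `σ`-conjugate to the identity, i.e. of the form `x⁻¹·σ(x)`. -/
theorem lang_power_series
    {p : ℕ} (hp : p.Prime) {e : ℕ} (he : 1 ≤ e) {q : ℕ} (hq : q = p ^ e)
    {k : Type*} [Field k] [IsAlgClosed k] [CharP k p]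
    {r : ℕ}
    (g : Matrix (Fin r) (Fin r) (PowerSeries k)) (hg : IsUnit g) :
    ∃ x : Matrix (Fin r) (Fin r) (PowerSeries k),
      IsUnit x ∧ g = x⁻¹ * x.map (psFrob q) := by
  haveI : ExpChar k p := ExpChar.prime hp
  set φ : k →+* k := iterateFrobenius k p e with hφdef
  have hφ : ∀ x : k, φ x = x ^ q := fun x => by
    rw [hφdef, iterateFrobenius_def, hq]
  have hq2 : 2 ≤ q := by
    rw [hq]
    calc 2 ≤ p := hp.two_le
      _ ≤ p ^ e := Nat.le_self_pow (by omega) p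
  have hqk : (q : k) = 0 := by
    rw [hq]
    push_cast
    rw [CharP.cast_eq_zero k p]
    exact zero_pow (by omega)
  have hpsFrob : ∀ f : PowerSeries k, psFrob q f = PowerSeries.map φ f := by
    intro f
    ext n
    simp [psFrob, PowerSeries.coeff_mk, PowerSeries.coeff_map, hφ]
  set G : ℕ → Matrix (Fin r) (Fin r) k :=
    fun n => Matrix.of fun i j => PowerSeries.coeff n (g i j) with hG
  have hG0 : IsUnit (G 0) := by
    rw [Matrix.isUnit_iff_isUnit_det]
    have h1 : IsUnit g.det := (Matrix.isUnit_iff_isUnit_det g).mp hg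
    have h2 : IsUnit (PowerSeries.constantCoeff g.det) :=
      PowerSeries.isUnit_iff_constantCoeff.mp h1
    have h3 : (G 0).det = PowerSeries.constantCoeff g.det := by
      rw [RingHom.map_det]
      congr 1
      ext i j
      simp [hG, RingHom.mapMatrix_apply, Matrix.map_apply,
        ← PowerSeries.coeff_zero_eq_constantCoeff]
    rw [h3]
    exact h2
  obtain ⟨X0, hX0u, hX0⟩ := matLang' hq2 hqk φ hφ (G 0) hG0
  have hstep := matStep hq2 hqk φ hφ (G 0) hG0
  set f : (n : ℕ) → ((i : ℕ) → i < n → Matrix (Fin r) (Fin r) k) → Matrix (Fin r) (Fin r) k :=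
    fun n prev =>
      if h : n = 0 then X0 else
        Classical.choose (hstep (∑ i ∈ (Finset.range n).attach,
          prev (i : ℕ) (Finset.mem_range.mp i.2) * G (n - (i : ℕ)))) with hf
  set X : ℕ → Matrix (Fin r) (Fin r) k := seqAux f with hX
  have hX0eq : X 0 = X0 := by
    rw [hX, seqAux_eq]
    simp [hf]
  have hXn : ∀ n, (X n).map φ = X n * G 0 + ∑ i ∈ Finset.range n, X i * G (n - i) := by
    intro n
    cases n with
    | zero =>
        rw [hX0eq]
        simpa using hX0
    | succ n =>
        have hunfold : X (n + 1) = Classical.choose (hstep (∑ i ∈ (Finset.range (n+1)).attach,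
            X (i : ℕ) * G (n + 1 - (i : ℕ)))) := by
          rw [hX, seqAux_eq]
          simp [hf]
        have hspec := Classical.choose_spec (hstep (∑ i ∈ (Finset.range (n+1)).attach,
            X (i : ℕ) * G (n + 1 - (i : ℕ))))
        rw [hunfold, hspec, Finset.sum_attach (Finset.range (n+1))
          (fun m => X m * G (n + 1 - m))]
  have hXrec : ∀ n, (X n).map φ = ∑ i ∈ Finset.range (n + 1), X i * G (n - i) := by
    intro n
    rw [Finset.sum_range_succ, hXn n, Nat.sub_self]
    abel
  set x : Matrix (Fin r) (Fin r) (PowerSeries k) :=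
    Matrix.of fun i j => PowerSeries.mk fun n => X n i j with hx
  have hxdet : IsUnit x.det := by
    apply PowerSeries.isUnit_iff_constantCoeff.mpr
    have h3 : PowerSeries.constantCoeff x.det = (X 0).det := by
      rw [RingHom.map_det]
      congr 1
    rw [h3, hX0eq]
    exact (Matrix.isUnit_iff_isUnit_det X0).mp hX0u
  have hxunit : IsUnit x := (Matrix.isUnit_iff_isUnit_det x).mpr hxdet
  have hmain : x * g = x.map (psFrob q) := by
    ext i j n
    have h1 : ∀ l, PowerSeries.coeff n (x i l * g l j)
        = ∑ ab ∈ Finset.HasAntidiagonal.antidiagonal n, X ab.1 i l * G ab.2 l j := by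
      intro l
      rw [PowerSeries.coeff_mul]
      refine Finset.sum_congr rfl fun ab _ => ?_
      simp [hx, hG, PowerSeries.coeff_mk]
    have h3 : ∑ ab ∈ Finset.HasAntidiagonal.antidiagonal n, ∑ l, X ab.1 i l * G ab.2 l j
        = ∑ ab ∈ Finset.HasAntidiagonal.antidiagonal n, (X ab.1 * G ab.2) i j :=
      Finset.sum_congr rfl fun ab _ => (Matrix.mul_apply).symm
    have h4 : ∑ ab ∈ Finset.HasAntidiagonal.antidiagonal n, (X ab.1 * G ab.2) i j
        = ∑ a ∈ Finset.range (n + 1), (X a * G (n - a)) i j :=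
      Finset.Nat.sum_antidiagonal_eq_sum_range_succ_mk (fun ab => (X ab.1 * G ab.2) i j) n
    have h5 : ∑ a ∈ Finset.range (n + 1), (X a * G (n - a)) i j = ((X n).map φ) i j := by
      rw [← Matrix.sum_apply i j, ← hXrec n]
    have hR : PowerSeries.coeff n (x.map (psFrob q) i j) = φ (X n i j) := by
      simp [hx, Matrix.map_apply, psFrob, PowerSeries.coeff_mk, hφ]
    rw [hR, Matrix.mul_apply, map_sum]
    rw [Finset.sum_congr rfl fun l _ => h1 l, Finset.sum_comm, h3, h4, h5, Matrix.map_apply]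
  refine ⟨x, hxunit, ?_⟩
  calc g = (x⁻¹ * x) * g := by rw [Matrix.nonsing_inv_mul x hxdet, one_mul]
    _ = x⁻¹ * (x * g) := by rw [mul_assoc]
    _ = x⁻¹ * x.map (psFrob q) := by rw [hmain]

end HVpaper
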